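/- Let L = ℚ(√3). The genus-2 curve C : y² = −2x⁶ − 3x⁴ + 20x² + 52 has no L-rational points; that is, there are no x, y ∈ L with y² = −2x⁶ − 3x⁴ + 20x² + 52. -/
import Mathlib

/-- `L = ℚ(√3)`, the real quadratic field, as a subfield of `ℝ`. -/
noncomputable def L : IntermediateField ℚ ℝ :=
  IntermediateField.adjoin ℚ ({Real.sqrt 3} : Set ℝ)

lemma sqrt3_irr : Irrational (Real.sqrt 3) := by
  have := (Nat.prime_three).irrational_sqrt
  simpa using this

lemma indep (p q : ℚ) (h : (p : ℝ) + q * Real.sqrt 3 = 0) : p = 0 ∧ q = 0 := by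
  by_cases hq : q = 0
  · subst hq; simp at h; exact ⟨by exact_mod_cast h, rfl⟩
  · exfalso
    have : Real.sqrt 3 = ((-p/q : ℚ) : ℝ) := by
      push_cast
      field_simp
      nlinarith [h]
    exact sqrt3_irr ⟨_, this.symm⟩

noncomputable def K : IntermediateField ℚ ℝ where
  carrier := {r : ℝ | ∃ a b : ℚ, r = a + b * Real.sqrt 3}
  mul_mem' := by
    rintro _ _ ⟨a, b, rfl⟩ ⟨c, d, rfl⟩
    refine ⟨a*c + 3*(b*d), a*d + b*c, ?_⟩
    have h : Real.sqrt 3 * Real.sqrt 3 = 3 := Real.mul_self_sqrt (by norm_num)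
    push_cast
    linear_combination (b * d : ℝ) * h
  add_mem' := by
    rintro _ _ ⟨a, b, rfl⟩ ⟨c, d, rfl⟩
    exact ⟨a + c, b + d, by push_cast; ring⟩
  algebraMap_mem' := fun q => ⟨q, 0, by norm_num⟩
  inv_mem' := by
    rintro r ⟨a, b, rfl⟩
    by_cases h0 : (a : ℝ) + b * Real.sqrt 3 = 0
    · exact ⟨0, 0, by rw [h0]; norm_num⟩
    · have hs : Real.sqrt 3 * Real.sqrt 3 = 3 := Real.mul_self_sqrt (by norm_num)
      have hne : a^2 - 3*b^2 ≠ 0 := by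
        intro h
        have hb : b ≠ 0 := by
          rintro rfl
          apply h0
          have : a = 0 := by nlinarith [h]
          simp [this]
        exact sqrt3_irr ⟨|a/b|, by
          rw [show ((|a/b| : ℚ) : ℝ) = |((a/b : ℚ) : ℝ)| by push_cast; simp
            , ← Real.sqrt_sq_eq_abs]
          congr 1
          have hb' : (b:ℝ) ≠ 0 := by exact_mod_cast hb
          have h' : (a:ℝ)^2 - 3*(b:ℝ)^2 = 0 := by exact_mod_cast h
          push_cast
          field_simp
          nlinarith [h']⟩
      refine ⟨a/(a^2 - 3*b^2), -b/(a^2 - 3*b^2), ?_⟩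
      have hC : ((a:ℝ)^2 - 3*(b:ℝ)^2) ≠ 0 := by
        intro h; apply hne
        exact_mod_cast h
      apply inv_eq_of_mul_eq_one_left
      push_cast
      field_simp
      linear_combination (-(b : ℝ)^2) * hs

lemma mem_L_decomp {x : ℝ} (hx : x ∈ L) : ∃ a b : ℚ, x = a + b * Real.sqrt 3 := by
  have hle : L ≤ K := by
    rw [L, IntermediateField.adjoin_le_iff]
    rintro r hr
    rw [Set.mem_singleton_iff] at hr
    subst hr
    show ∃ a b : ℚ, Real.sqrt 3 = a + b * Real.sqrt 3
    exact ⟨0, 1, by norm_num⟩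
  exact hle hx


open Polynomial

instance fact13 : Fact (Nat.Prime 13) := ⟨by norm_num⟩

set_option maxRecDepth 4000 in
lemma dec1 : ∀ x y : ZMod (13^2), y^2 ≠ -2*x^6 - 3*x^4 + 20*x^2 + 52 := by decide

set_option maxRecDepth 4000 in
lemma dec2 : ∀ w z : ZMod (13^2), z^2 ≠ -2 - 3*w^2 + 20*w^4 + 52*w^6 := by decide

lemma exists_sqrt3 : ∃ t : ℚ_[13], t^2 = 3 := by
  have key : ‖(X^2 - C 3 : Polynomial ℤ_[13]).eval 4‖ <
      ‖(X^2 - C 3 : Polynomial ℤ_[13]).derivative.eval 4‖ ^ 2 := by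
    have e1 : (X^2 - C 3 : Polynomial ℤ_[13]).eval 4 = 13 := by
      simp; norm_num
    have e2 : (X^2 - C 3 : Polynomial ℤ_[13]).derivative.eval 4 = 8 := by
      simp [derivative_sub, derivative_pow]; norm_num
    rw [e1, e2]
    have h13 : ‖(13 : ℤ_[13])‖ = (13:ℝ)⁻¹ := by
      have := PadicInt.norm_p (p := 13)
      simpa using this
    have h8 : ‖(8 : ℤ_[13])‖ = 1 := by
      have hle : ‖(8 : ℤ_[13])‖ ≤ 1 := PadicInt.norm_le_one _
      have : ¬ ‖((8:ℤ) : ℤ_[13])‖ < 1 := by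
        rw [PadicInt.norm_int_lt_one_iff_dvd]
        norm_num
      push_cast at this
      linarith [lt_or_ge ‖(8 : ℤ_[13])‖ 1 |>.resolve_left this]
    rw [h13, h8]
    norm_num
  obtain ⟨z, hz, -⟩ := hensels_lemma key
  refine ⟨(z : ℚ_[13]), ?_⟩
  have h0 : z^2 - 3 = 0 := by simpa using hz
  have hz3 : z^2 = 3 := sub_eq_zero.mp h0
  exact_mod_cast congrArg (fun u : ℤ_[13] => (u : ℚ_[13])) hz3

lemma core (X Y : ℚ_[13]) : Y^2 ≠ -2*X^6 - 3*X^4 + 20*X^2 + 52 := by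
  intro hEq
  by_cases hX : ‖X‖ ≤ 1
  · set x : ℤ_[13] := ⟨X, hX⟩ with hxdef
    have hY : ‖Y‖ ≤ 1 := by
      have h1 : ‖Y‖^2 = ‖((-2*x^6 - 3*x^4 + 20*x^2 + 52 : ℤ_[13]) : ℚ_[13])‖ := by
        rw [← norm_pow, hEq]
        norm_cast
      have h2 : ‖((-2*x^6 - 3*x^4 + 20*x^2 + 52 : ℤ_[13]) : ℚ_[13])‖ ≤ 1 :=
        (-2*x^6 - 3*x^4 + 20*x^2 + 52 : ℤ_[13]).2
      nlinarith [norm_nonneg Y]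
    set y : ℤ_[13] := ⟨Y, hY⟩ with hydef
    have heq : y^2 = -2*x^6 - 3*x^4 + 20*x^2 + 52 := by
      apply Subtype.coe_injective
      push_cast
      exact hEq
    have := congrArg (PadicInt.toZModPow 2) heq
    simp only [map_add, map_sub, map_mul, map_pow, map_neg, map_ofNat] at this
    exact dec1 _ _ this
  · have hX0 : X ≠ 0 := by
      intro h; apply hX; simp [h]
    set W := X⁻¹ with hWdef
    have hWX : W * X = 1 := inv_mul_cancel₀ hX0
    have hW : ‖W‖ ≤ 1 := by
      rw [hWdef, norm_inv]
      rw [not_le] at hX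
      have : (0:ℝ) < ‖X‖ := by linarith
      rw [inv_le_one_iff₀]
      right; linarith
    set Z := Y * W^3 with hZdef
    have hZEq : Z^2 = -2 - 3*W^2 + 20*W^4 + 52*W^6 := by
      rw [hZdef]
      linear_combination (W^6) * hEq +
        (-2*((W*X)^5+(W*X)^4+(W*X)^3+(W*X)^2+W*X+1)
          - 3*W^2*((W*X)^3+(W*X)^2+W*X+1) + 20*W^4*(W*X+1)) * hWX
    set w : ℤ_[13] := ⟨W, hW⟩ with hwdef
    have hZ : ‖Z‖ ≤ 1 := by
      have h1 : ‖Z‖^2 = ‖((-2 - 3*w^2 + 20*w^4 + 52*w^6 : ℤ_[13]) : ℚ_[13])‖ := by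
        rw [← norm_pow, hZEq]
        norm_cast
      have h2 : ‖((-2 - 3*w^2 + 20*w^4 + 52*w^6 : ℤ_[13]) : ℚ_[13])‖ ≤ 1 :=
        (-2 - 3*w^2 + 20*w^4 + 52*w^6 : ℤ_[13]).2
      nlinarith [norm_nonneg Z]
    set z : ℤ_[13] := ⟨Z, hZ⟩ with hzdef
    have heq : z^2 = -2 - 3*w^2 + 20*w^4 + 52*w^6 := by
      apply Subtype.coe_injective
      push_cast
      exact hZEq
    have := congrArg (PadicInt.toZModPow 2) heq
    simp only [map_add, map_sub, map_mul, map_pow, map_neg, map_ofNat] at this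
    exact dec2 _ _ this


/-- The genus-2 curve `y² = −2x⁶ − 3x⁴ + 20x² + 52` has no `L`-rational points,
where `L = ℚ(√3)`. -/
theorem no_L_points_on_genus_two_curve :
    ¬ ∃ x y : ℝ, x ∈ L ∧ y ∈ L ∧
      y ^ 2 = -2 * x ^ 6 - 3 * x ^ 4 + 20 * x ^ 2 + 52 := by
  rintro ⟨x, y, hx, hy, heq⟩
  obtain ⟨a, b, rfl⟩ := mem_L_decomp hx
  obtain ⟨c, d, rfl⟩ := mem_L_decomp hy
  have hs : Real.sqrt 3 ^ 2 = 3 := Real.sq_sqrt (by norm_num)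
  have hpq : (((-52 + 3*d^2 + c^2 - 60*b^2 + 27*b^4 + 54*b^6 - 20*a^2 + 54*a^2*b^2 + 270*a^2*b^4 + 3*a^4 + 90*a^4*b^2 + 2*a^6 : ℚ)) : ℝ) + (((2*c*d - 40*a*b + 36*a*b^3 + 108*a*b^5 + 12*a^3*b + 120*a^3*b^3 + 12*a^5*b : ℚ)) : ℝ) * Real.sqrt 3 = 0 := by
    push_cast
    linear_combination heq - ((d:ℝ)^2 - 20*(b:ℝ)^2 + 9*(b:ℝ)^4 + 3*(b:ℝ)^4*(Real.sqrt 3)^2 + 18*(b:ℝ)^6 + 6*(b:ℝ)^6*(Real.sqrt 3)^2 + 2*(b:ℝ)^6*(Real.sqrt 3)^4 + 12*(a:ℝ)*(b:ℝ)^3*(Real.sqrt 3) + 36*(a:ℝ)*(b:ℝ)^5*(Real.sqrt 3) + 12*(a:ℝ)*(b:ℝ)^5*(Real.sqrt 3)^3 + 18*(a:ℝ)^2*(b:ℝ)^2 + 90*(a:ℝ)^2*(b:ℝ)^4 + 30*(a:ℝ)^2*(b:ℝ)^4*(Real.sqrt 3)^2 + 40*(a:ℝ)^3*(b:ℝ)^3*(Real.sqrt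 3) + 30*(a:ℝ)^4*(b:ℝ)^2) * hs
  obtain ⟨hp, hq⟩ := indep _ _ hpq
  obtain ⟨t, ht⟩ := exists_sqrt3
  have hp' := congrArg (fun r : ℚ => (r : ℚ_[13])) hp
  have hq' := congrArg (fun r : ℚ => (r : ℚ_[13])) hq
  push_cast at hp' hq'
  exact core ((a : ℚ_[13]) + (b : ℚ_[13]) * t) ((c : ℚ_[13]) + (d : ℚ_[13]) * t)
    (by linear_combination hp' + t * hq' + ((d:ℚ_[13])^2 - 20*(b:ℚ_[13])^2 + 9*(b:ℚ_[13])^4 + 3*(b:ℚ_[13])^4*(t)^2 + 18*(b:ℚ_[13])^6 + 6*(b:ℚ_[13])^6*(t)^2 + 2*(b:ℚ_[13])^6*(t)^4 + 12*(a:ℚ_[13])*(b:ℚ_[13])^3*(t) + 36*(a:ℚ_[13])*(b:ℚ_[13])^5*(t) + 12*(a:ℚ_[13])*(b:ℚ_[13])^5*(t)^3 + 18*(a:ℚ_[13])^2*(b:ℚ_[13])^2 + 90*(a:ℚ_[13])^2*(b:ℚ_[13])^4 + 30*(a:ℚ_[13])^2*(b:ℚ_[13])^4*(t)^2 + 40*(a:ℚ_[13])^3*(b:ℚ_[13])^3*(t)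 + 30*(a:ℚ_[13])^4*(b:ℚ_[13])^2) * ht)
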